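/- For all integers c ≥ 1 and n ≥ 2, the domination number of the directed n-constrained de Bruijn graph on n+c symbols (whose vertices are the partial n-permutations of [n+c]) satisfies (1/(c+2)) · (n+c)!/c! ≤ γ(cDB⁺(n+c,n,n)) ≤ (n+c−1) · (n+c−1)!/(c+1)!. -/

import Mathlib

/-- A sequence `x` of length `n` over the alphabet `Fin d` is `t`-constrained if
equal symbols occur at positions at distance at least `t`. -/
def dbConstrained (d t n : ℕ) (x : Fin n → Fin d) : Prop :=
  ∀ i j : Fin n, i < j → x i = x j → t ≤ (j : ℕ) - (i : ℕ)

/-- The vertex set `V(d,t,n)` of the `t`-constrained de Bruijn graph: all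
`t`-constrained sequences of length `n` over a `d`-letter alphabet. -/
abbrev dbVtx (d t n : ℕ) : Type := {x : Fin n → Fin d // dbConstrained d t n x}

/-- `dbShift x y` holds when there is a directed de Bruijn edge from `x` to `y`,
i.e. `y` is obtained from `x` by deleting its first symbol and appending a new
last symbol. -/
def dbShift {d t n : ℕ} (x y : dbVtx d t n) : Prop :=
  ∀ (i : Fin n) (h : (i : ℕ) + 1 < n), y.val i = x.val ⟨(i : ℕ) + 1, h⟩

/-- `S` is a dominating set of the directed `t`-constrained de Bruijn graph
`cDB⁺(d,t,n)`: every vertex is dominated by (equal to, or an out-neighbor of)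
some element of `S`. -/
def dbDirDominating {d t n : ℕ} (S : Set (dbVtx d t n)) : Prop :=
  ∀ v : dbVtx d t n, ∃ s ∈ S, s = v ∨ dbShift s v

/-- The domination number `γ(cDB⁺(d,t,n))` of the directed `t`-constrained
de Bruijn graph. -/
noncomputable def gammaDir (d t n : ℕ) : ℕ :=
  sInf {k | ∃ S : Set (dbVtx d t n), S.Finite ∧ S.ncard = k ∧ dbDirDominating S}

/-- Adjacency in the undirected `t`-constrained de Bruijn graph `cDB(d,t,n)`:
edge directions are ignored and loops are removed. -/
def dbAdj {d t n : ℕ} (x y : dbVtx d t n) : Prop :=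
  x ≠ y ∧ (dbShift x y ∨ dbShift y x)

/-- `S` is a dominating set of the undirected graph `cDB(d,t,n)`: every vertex
is dominated by (equal to, or adjacent to) some element of `S`. -/
def dbUndirDominating {d t n : ℕ} (S : Set (dbVtx d t n)) : Prop :=
  ∀ v : dbVtx d t n, ∃ s ∈ S, s = v ∨ dbAdj s v

/-- The domination number `γ(cDB(d,t,n))` of the undirected `t`-constrained
de Bruijn graph. -/
noncomputable def gammaUndir (d t n : ℕ) : ℕ :=
  sInf {k | ∃ S : Set (dbVtx d t n), S.Finite ∧ S.ncard = k ∧ dbUndirDominating S}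


/-- for `c ≥ 1`, `n ≥ 2`,
`(1/(c+2)) * (n+c)!/c! ≤ γ(cDB⁺(n+c,n,n)) ≤ (n+c-1) * (n+c-1)!/(c+1)!`. -/
instance (d t n : ℕ) : DecidablePred (dbConstrained d t n) := fun _ => by
  unfold dbConstrained; infer_instance

instance {d t n : ℕ} (x y : dbVtx d t n) : Decidable (dbShift x y) := by
  unfold dbShift; infer_instance

lemma dbConstrained_iff_injective {d n : ℕ} (x : Fin n → Fin d) :
    dbConstrained d n n x ↔ Function.Injective x := by
  constructor
  · intro h i j hx
    by_contra hne
    rcases Ne.lt_or_gt hne with hlt | hlt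
    · have h1 := h i j hlt hx
      have h2 := Fin.lt_def.mp hlt
      have := j.isLt
      omega
    · have h1 := h j i hlt hx.symm
      have h2 := Fin.lt_def.mp hlt
      have := i.isLt
      omega
  · intro h i j hij hx
    exact absurd (h hx) (ne_of_lt hij)

lemma dbVtx_card (d n : ℕ) : Fintype.card (dbVtx d n n) = d.descFactorial n := by
  have e : dbVtx d n n ≃ (Fin n ↪ Fin d) :=
    (Equiv.subtypeEquivRight fun x => dbConstrained_iff_injective x).trans
      (Equiv.subtypeInjectiveEquivEmbedding _ _)
  rw [Fintype.card_congr e, Fintype.card_embedding_eq, Fintype.card_fin, Fintype.card_fin]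

lemma dbDominated_card_le {n c : ℕ} (hn : 2 ≤ n) (hc : 1 ≤ c) (s : dbVtx (n+c) n n) :
    (Finset.univ.filter (fun v : dbVtx (n+c) n n => s = v ∨ dbShift s v)).card ≤ c + 2 := by
  classical
  set T : Finset (Fin (n+c)) :=
    Finset.univ.filter (fun a => ∀ i : Fin n, 0 < (i:ℕ) → s.val i ≠ a) with hT
  have hsinj : Function.Injective s.val := (dbConstrained_iff_injective s.val).mp s.2
  -- card of T
  have hTc : Tᶜ = (Finset.univ.filter (fun i : Fin n => 0 < (i:ℕ))).image s.val := by
    ext a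
    simp only [hT, Finset.mem_compl, Finset.mem_filter, Finset.mem_univ, true_and,
      Finset.mem_image]
    push_neg
    tauto
  have hIcard : (Finset.univ.filter (fun i : Fin n => 0 < (i:ℕ))).card = n - 1 := by
    have : (Finset.univ.filter (fun i : Fin n => 0 < (i:ℕ)))
        = Finset.univ.erase ⟨0, by omega⟩ := by
      ext i
      simp only [Finset.mem_filter, Finset.mem_univ, true_and, Finset.mem_erase, and_true]
      constructor
      · intro h heq
        rw [heq] at h
        exact lt_irrefl 0 h
      · intro h
        by_contra hcon
        exact h (Fin.ext (show (i:ℕ) = 0 by omega))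
    rw [this, Finset.card_erase_of_mem (Finset.mem_univ _), Finset.card_univ, Fintype.card_fin]
  have hTcard : T.card = c + 1 := by
    have h1 : Tᶜ.card = n - 1 := by
      rw [hTc, Finset.card_image_of_injective _ hsinj, hIcard]
    have h2 := Finset.card_compl T (α := Fin (n+c))
    have h3 := Finset.card_le_univ T
    rw [Fintype.card_fin] at h2 h3
    omega
  -- membership of the last coordinate
  have hmemT : ∀ v : dbVtx (n+c) n n, dbShift s v → v.val ⟨n-1, by omega⟩ ∈ T := by
    intro v hsh
    have hvinj : Function.Injective v.val := (dbConstrained_iff_injective v.val).mp v.2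
    simp only [hT, Finset.mem_filter, Finset.mem_univ, true_and]
    intro i hi hEq
    have hin := i.isLt
    have hlt : (i:ℕ) - 1 < n := by omega
    have hi1 : (i:ℕ) - 1 + 1 < n := by omega
    have h1 := hsh ⟨(i:ℕ)-1, hlt⟩ hi1
    have h2 : (⟨(i:ℕ)-1+1, hi1⟩ : Fin n) = i := Fin.ext (show (i:ℕ) - 1 + 1 = (i:ℕ) by omega)
    rw [h2, hEq] at h1
    have h3 : (⟨(i:ℕ)-1, hlt⟩ : Fin n) = ⟨n-1, by omega⟩ := hvinj h1
    have h4 : (i:ℕ) - 1 = n - 1 := by simpa [Fin.mk.injEq] using h3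
    omega
  let f : dbVtx (n+c) n n → Option {a // a ∈ T} := fun v =>
    if h : dbShift s v ∧ v ≠ s then some ⟨v.val ⟨n-1, by omega⟩, hmemT v h.1⟩ else none
  have hle := Finset.card_le_card_of_injOn f
    (s := Finset.univ.filter (fun v : dbVtx (n+c) n n => s = v ∨ dbShift s v))
    (t := (Finset.univ : Finset (Option {a // a ∈ T})))
    (fun v _ => Finset.mem_univ _) ?_
  · calc (Finset.univ.filter (fun v : dbVtx (n+c) n n => s = v ∨ dbShift s v)).card
        ≤ (Finset.univ : Finset (Option {a // a ∈ T})).card := hle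
      _ = c + 2 := by
          rw [Finset.card_univ, Fintype.card_option, Fintype.card_coe, hTcard]
  · intro v hv w hw hfvw
    simp only [Finset.coe_filter, Set.mem_setOf_eq, Finset.mem_univ, true_and] at hv hw
    by_cases h1 : dbShift s v ∧ v ≠ s
    · by_cases h2 : dbShift s w ∧ w ≠ s
      · simp only [f, dif_pos h1, dif_pos h2, Option.some.injEq, Subtype.mk.injEq] at hfvw
        apply Subtype.ext
        funext i
        by_cases hi : (i:ℕ) + 1 < n
        · rw [h1.1 i hi, h2.1 i hi]
        · have : i = ⟨n-1, by omega⟩ := Fin.ext (show (i:ℕ) = n - 1 by have := i.isLt; omega)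
          rw [this]
          exact hfvw
      · simp only [f, dif_pos h1, dif_neg h2] at hfvw
        exact nomatch hfvw
    · have hv' : v = s := by
        rcases hv with h | h
        · exact h.symm
        · by_contra hne
          exact h1 ⟨h, hne⟩
      by_cases h2 : dbShift s w ∧ w ≠ s
      · simp only [f, dif_neg h1, dif_pos h2] at hfvw
        exact nomatch hfvw
      · have hw' : w = s := by
          rcases hw with h | h
          · exact h.symm
          · by_contra hne
            exact h2 ⟨h, hne⟩
        rw [hv', hw']

lemma dbLower {n c : ℕ} (hn : 2 ≤ n) (hc : 1 ≤ c) :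
    (n+c).descFactorial n ≤ (c+2) * gammaDir (n+c) n n := by
  classical
  have hne : {k | ∃ S : Set (dbVtx (n+c) n n), S.Finite ∧ S.ncard = k ∧
      dbDirDominating S}.Nonempty :=
    ⟨(Set.univ : Set (dbVtx (n+c) n n)).ncard, Set.univ, Set.finite_univ, rfl,
      fun v => ⟨v, trivial, Or.inl rfl⟩⟩
  obtain ⟨S, hSfin, hScard, hSdom⟩ := Nat.sInf_mem hne
  choose g hg1 hg2 using hSdom
  have key := Finset.card_le_mul_card_image_of_maps_to
    (f := g) (s := (Finset.univ : Finset (dbVtx (n+c) n n))) (t := hSfin.toFinset)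
    (fun v _ => hSfin.mem_toFinset.mpr (hg1 v)) (c+2) ?_
  · rw [Finset.card_univ, dbVtx_card] at key
    have hFc : hSfin.toFinset.card = gammaDir (n+c) n n := by
      rw [← Set.ncard_eq_toFinset_card S hSfin, hScard]; rfl
    rw [hFc] at key
    exact key
  · intro b hb
    refine le_trans (Finset.card_le_card ?_) (dbDominated_card_le hn hc b)
    intro v hv
    simp only [Finset.mem_filter, Finset.mem_univ, true_and] at hv ⊢
    rcases hg2 v with h | h
    · exact Or.inl (hv.symm.trans h)
    · exact Or.inr (hv ▸ h)

def dbTailCompl {d n : ℕ} (w : dbVtx d n n) : Finset (Fin d) :=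
  Finset.univ.filter (fun a => ∀ i : Fin n, 0 < (i:ℕ) → w.val i ≠ a)

def dbHeadCompl {d n : ℕ} (v : dbVtx d n n) : Finset (Fin d) :=
  Finset.univ.filter (fun b => ∀ j : Fin n, (j:ℕ) < n - 1 → v.val j ≠ b)

def dbShiftIn {d n : ℕ} (a : Fin d) (v : Fin n → Fin d) : Fin n → Fin d :=
  fun i => if (i:ℕ) = 0 then a else v ⟨(i:ℕ) - 1, by have := i.isLt; omega⟩

lemma dbShiftIn_pos {d n : ℕ} (a : Fin d) (v : Fin n → Fin d) (i : Fin n) (h : 0 < (i:ℕ)) :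
    dbShiftIn a v i = v ⟨(i:ℕ) - 1, by have := i.isLt; omega⟩ := if_neg (by omega)

lemma dbShiftIn_apply_zero {d n : ℕ} (hz : 0 < n) (a : Fin d) (v : Fin n → Fin d) :
    dbShiftIn a v ⟨0, hz⟩ = a := if_pos rfl

lemma dbShiftIn_apply_one {d n : ℕ} (h1 : 1 < n) (a : Fin d) (v : Fin n → Fin d) :
    dbShiftIn a v ⟨1, h1⟩ = v ⟨0, by omega⟩ := by
  rw [dbShiftIn_pos a v ⟨1, h1⟩ (by simp)]
  congr 1

lemma dbShiftIn_zero {d n : ℕ} (a : Fin d) (v : Fin n → Fin d) (i : Fin n)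
    (h : (i:ℕ) = 0) : dbShiftIn a v i = a := if_pos h

lemma dbShiftIn_inj {d n : ℕ} (hn : 2 ≤ n) {v : Fin n → Fin d} (hv : Function.Injective v)
    {a : Fin d} (ha : ∀ j : Fin n, (j:ℕ) < n - 1 → v j ≠ a) :
    Function.Injective (dbShiftIn a v) := by
  intro i j h
  by_cases hi : (i:ℕ) = 0 <;> by_cases hj : (j:ℕ) = 0
  · exact Fin.ext (by omega)
  · rw [dbShiftIn_zero a v i hi, dbShiftIn_pos a v j (by omega)] at h
    exact absurd h.symm (ha ⟨(j:ℕ)-1, by have := j.isLt; omega⟩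
      (show (j:ℕ)-1 < n-1 by have := j.isLt; omega))
  · rw [dbShiftIn_pos a v i (by omega), dbShiftIn_zero a v j hj] at h
    exact absurd h (ha ⟨(i:ℕ)-1, by have := i.isLt; omega⟩
      (show (i:ℕ)-1 < n-1 by have := i.isLt; omega))
  · rw [dbShiftIn_pos a v i (by omega), dbShiftIn_pos a v j (by omega)] at h
    have h2 : (i:ℕ) - 1 = (j:ℕ) - 1 := by simpa [Fin.mk.injEq] using hv h
    exact Fin.ext (by omega)

lemma dbShift_shiftIn {d n : ℕ} (a : Fin d) (v : dbVtx d n n)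
    (hs : dbConstrained d n n (dbShiftIn a v.val)) :
    dbShift (⟨dbShiftIn a v.val, hs⟩ : dbVtx d n n) v := by
  intro i h
  show v.val i = dbShiftIn a v.val ⟨(i:ℕ)+1, h⟩
  rw [dbShiftIn_pos a v.val ⟨(i:ℕ)+1, h⟩ (by simp)]
  congr 1

lemma dbTailCompl_shiftIn {d n : ℕ} (hn : 2 ≤ n) (a : Fin d) (v : dbVtx d n n)
    (hs : dbConstrained d n n (dbShiftIn a v.val)) :
    dbTailCompl (⟨dbShiftIn a v.val, hs⟩ : dbVtx d n n) = dbHeadCompl v := by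
  ext b
  simp only [dbTailCompl, dbHeadCompl, Finset.mem_filter, Finset.mem_univ, true_and]
  constructor
  · intro h j hj
    have h1 := h ⟨(j:ℕ)+1, by have := j.isLt; omega⟩ (by simp)
    rw [dbShiftIn_pos a v.val _ (by simp)] at h1
    have h2 : (⟨(j:ℕ)+1-1, by have := j.isLt; omega⟩ : Fin n) = j := Fin.ext (by simp)
    rwa [h2] at h1
  · intro h i hi
    rw [dbShiftIn_pos a v.val i hi]
    exact h ⟨(i:ℕ)-1, by have := i.isLt; omega⟩ (show (i:ℕ)-1 < n-1 by have := i.isLt; omega)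

lemma dbExists_avoid {d n : ℕ} (hnd : n < d) (f : Fin n → Fin d) :
    ∃ a : Fin d, ∀ i : Fin n, f i ≠ a := by
  have h : ((Finset.univ : Finset (Fin n)).image f)ᶜ.Nonempty := by
    rw [← Finset.card_pos, Finset.card_compl]
    have h1 : ((Finset.univ : Finset (Fin n)).image f).card ≤ n :=
      le_trans Finset.card_image_le (by simp)
    rw [Fintype.card_fin]
    omega
  obtain ⟨b, hb⟩ := h
  exact ⟨b, fun i hi =>
    (Finset.mem_compl.mp hb) (Finset.mem_image.mpr ⟨i, Finset.mem_univ i, hi⟩)⟩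

lemma dbUpper {n c : ℕ} (hn : 2 ≤ n) (hc : 1 ≤ c) :
    gammaDir (n+c) n n ≤ (n+c-1) * ((n+c-1).descFactorial (n-2)) := by
  classical
  have hz : (0:ℕ) < n := by omega
  have h1n : (1:ℕ) < n := by omega
  set o : Fin (n+c) := ⟨1, by omega⟩ with ho
  set S : Set (dbVtx (n+c) n n) := {v | v.val ⟨0, hz⟩ = o ∨ (v.val ⟨1, h1n⟩ ≠ o ∧
    (∃ i : Fin n, 0 < (i:ℕ) ∧ v.val i = o) ∧
    ∀ a ∈ dbTailCompl v, v.val ⟨0, hz⟩ ≤ a)} with hS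
  have vinj : ∀ v : dbVtx (n+c) n n, Function.Injective v.val :=
    fun v => (dbConstrained_iff_injective v.val).mp v.2
  have memS : ∀ v : dbVtx (n+c) n n, (v.val ⟨0, hz⟩ = o ∨ (v.val ⟨1, h1n⟩ ≠ o ∧
      (∃ i : Fin n, 0 < (i:ℕ) ∧ v.val i = o) ∧
      ∀ a ∈ dbTailCompl v, v.val ⟨0, hz⟩ ≤ a)) ↔ v ∈ S := by
    intro v
    rw [hS, Set.mem_setOf_eq]
  -- Domination
  have hSdom : dbDirDominating S := by
    intro v
    by_cases h0 : v.val ⟨0, hz⟩ = o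
    · exact ⟨v, (memS v).mp (Or.inl h0), Or.inl rfl⟩
    · by_cases h1 : ∃ j : Fin n, (j:ℕ) < n - 1 ∧ v.val j = o
      · -- o appears in the head of v at a positive position
        obtain ⟨j, hjlt, hjo⟩ := h1
        have hjpos : 0 < (j:ℕ) := by
          rcases Nat.eq_zero_or_pos (j:ℕ) with h | h
          · exfalso
            apply h0
            have : j = ⟨0, hz⟩ := Fin.ext h
            rwa [this] at hjo
          · exact h
        have hHne : (dbHeadCompl v).Nonempty := by
          obtain ⟨b, hb⟩ := dbExists_avoid (show n < n+c by omega) v.val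
          refine ⟨b, ?_⟩
          simp only [dbHeadCompl, Finset.mem_filter, Finset.mem_univ, true_and]
          exact fun jj _ => hb jj
        set a := (dbHeadCompl v).min' hHne with ha
        have haH : a ∈ dbHeadCompl v := Finset.min'_mem _ _
        have hamem : ∀ jj : Fin n, (jj:ℕ) < n-1 → v.val jj ≠ a := by
          simpa [dbHeadCompl] using haH
        have hinj := dbShiftIn_inj hn (vinj v) hamem
        set s : dbVtx (n+c) n n :=
          ⟨dbShiftIn a v.val, (dbConstrained_iff_injective _).mpr hinj⟩ with hsdef
        have hshift : dbShift s v := dbShift_shiftIn a v _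
        refine ⟨s, (memS s).mp (Or.inr ⟨?_, ⟨⟨(j:ℕ)+1, by have := j.isLt; omega⟩, ?_, ?_⟩, ?_⟩),
          Or.inr hshift⟩
        · -- s₁ = v₀ ≠ o
          show dbShiftIn a v.val ⟨1, h1n⟩ ≠ o
          rw [dbShiftIn_apply_one h1n a v.val]
          exact fun hcon => h0 (by rwa [show (⟨0, by omega⟩ : Fin n) = ⟨0, hz⟩ from rfl] at hcon)
        · show 0 < ((⟨(j:ℕ)+1, _⟩ : Fin n) : ℕ)
          simp
        · show dbShiftIn a v.val ⟨(j:ℕ)+1, _⟩ = o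
          rw [dbShiftIn_pos a v.val _ (by simp)]
          have : (⟨((⟨(j:ℕ)+1, by have := j.isLt; omega⟩ : Fin n) : ℕ) - 1,
              by have := j.isLt; omega⟩ : Fin n) = j := Fin.ext (by simp)
          rw [this]
          exact hjo
        · -- minimality
          intro b hb
          have hTC : dbTailCompl s = dbHeadCompl v := dbTailCompl_shiftIn hn a v _
          rw [hTC] at hb
          show dbShiftIn a v.val ⟨0, hz⟩ ≤ b
          rw [dbShiftIn_apply_zero hz a v.val]
          exact Finset.min'_le _ _ hb
      · -- o does not appear in the head of v
        push_neg at h1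
        have hinj := dbShiftIn_inj hn (vinj v) h1
        set s : dbVtx (n+c) n n :=
          ⟨dbShiftIn o v.val, (dbConstrained_iff_injective _).mpr hinj⟩ with hsdef
        refine ⟨s, (memS s).mp (Or.inl ?_), Or.inr (dbShift_shiftIn o v _)⟩
        show dbShiftIn o v.val ⟨0, hz⟩ = o
        exact dbShiftIn_apply_zero hz o v.val
  -- the bound on the cardinality
  have hγ : gammaDir (n+c) n n ≤ S.ncard :=
    Nat.sInf_le ⟨S, Set.toFinite S, rfl, hSdom⟩
  refine le_trans hγ ?_
  rw [Set.ncard_eq_toFinset_card' S]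
  have hcard : Fintype.card (Fin (n+c-1) × {f : Fin (n-2) → Fin (n+c-1) // Function.Injective f})
      = (n+c-1) * ((n+c-1).descFactorial (n-2)) := by
    rw [Fintype.card_prod, Fintype.card_fin,
      Fintype.card_congr (Equiv.subtypeInjectiveEquivEmbedding (Fin (n-2)) (Fin (n+c-1))),
      Fintype.card_embedding_eq, Fintype.card_fin, Fintype.card_fin]
  rw [← hcard, ← Finset.card_univ]
  let enc : Fin (n+c) → Fin (n+c) → Fin (n+c-1) := fun b x =>
    ⟨if (x:ℕ) < (b:ℕ) then (x:ℕ) else (x:ℕ) - 1, by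
      have hx := x.isLt; have hb := b.isLt; split_ifs <;> omega⟩
  have henc : ∀ b x y : Fin (n+c), x ≠ b → y ≠ b → enc b x = enc b y → x = y := by
    intro b x y hx hy h
    have hx' : (x:ℕ) ≠ (b:ℕ) := fun hh => hx (Fin.ext hh)
    have hy' : (y:ℕ) ≠ (b:ℕ) := fun hh => hy (Fin.ext hh)
    have h' : (if (x:ℕ) < (b:ℕ) then (x:ℕ) else (x:ℕ) - 1)
        = (if (y:ℕ) < (b:ℕ) then (y:ℕ) else (y:ℕ) - 1) := congrArg Fin.val h
    have hxl := x.isLt; have hyl := y.isLt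
    apply Fin.ext
    split_ifs at h' <;> omega
  have hidx2 : ∀ j : Fin (n-2), (j:ℕ) + 2 < n := fun j => by have := j.isLt; omega
  have h1o : ∀ v ∈ S, v.val ⟨1, h1n⟩ ≠ o := by
    intro v hv
    rcases (memS v).mpr hv with h | h
    · intro hcon
      have := vinj v (hcon.trans h.symm)
      simp [Fin.ext_iff] at this
    · exact h.1
  have hne1 : ∀ (v : dbVtx (n+c) n n) (j : Fin (n-2)),
      v.val ⟨(j:ℕ)+2, hidx2 j⟩ ≠ v.val ⟨1, h1n⟩ := by
    intro v j hh
    have := vinj v hh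
    simp [Fin.ext_iff] at this
  let Φ : dbVtx (n+c) n n → Fin (n+c-1) × {f : Fin (n-2) → Fin (n+c-1) // Function.Injective f} :=
    fun v => (enc o (v.val ⟨1, h1n⟩),
      ⟨fun j => enc (v.val ⟨1, h1n⟩) (v.val ⟨(j:ℕ)+2, hidx2 j⟩), by
        intro j1 j2 hj
        have := vinj v (henc _ _ _ (hne1 v j1) (hne1 v j2) hj)
        have h2 : (j1:ℕ) + 2 = (j2:ℕ) + 2 := by simpa [Fin.mk.injEq] using this
        exact Fin.ext (by omega)⟩)
  refine Finset.card_le_card_of_injOn Φ (fun v _ => Finset.mem_univ _) ?_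
  intro v hv w hw hΦ
  rw [Finset.mem_coe, Set.mem_toFinset] at hv hw
  have h1eq : v.val ⟨1, h1n⟩ = w.val ⟨1, h1n⟩ :=
    henc o _ _ (h1o v hv) (h1o w hw) (congrArg Prod.fst hΦ)
  have h2eq : ∀ j : Fin (n-2), v.val ⟨(j:ℕ)+2, hidx2 j⟩ = w.val ⟨(j:ℕ)+2, hidx2 j⟩ := by
    intro j
    have hΦ2 := congrFun (Subtype.ext_iff.mp (congrArg Prod.snd hΦ)) j
    simp only [Φ] at hΦ2
    have hΦ2' : enc (v.val ⟨1, h1n⟩) (v.val ⟨(j:ℕ)+2, hidx2 j⟩)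
        = enc (v.val ⟨1, h1n⟩) (w.val ⟨(j:ℕ)+2, hidx2 j⟩) := by
      rw [hΦ2, ← h1eq]
    exact henc _ _ _ (hne1 v j) (h1eq ▸ hne1 w j) hΦ2'
  have htail : ∀ i : Fin n, 0 < (i:ℕ) → v.val i = w.val i := by
    intro i hi
    rcases eq_or_lt_of_le (show 1 ≤ (i:ℕ) from hi) with h | h
    · have : i = ⟨1, h1n⟩ := Fin.ext h.symm
      rw [this]
      exact h1eq
    · have hj : (i:ℕ) - 2 < n - 2 := by have := i.isLt; omega
      have hieq : i = ⟨((⟨(i:ℕ)-2, hj⟩ : Fin (n-2)) : ℕ)+2, hidx2 _⟩ :=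
        Fin.ext (show (i:ℕ) = (i:ℕ)-2+2 by omega)
      rw [hieq]
      exact h2eq _
  have hTC : dbTailCompl v = dbTailCompl w := by
    ext b
    simp only [dbTailCompl, Finset.mem_filter, Finset.mem_univ, true_and]
    constructor
    · intro hh i hi
      rw [← htail i hi]
      exact hh i hi
    · intro hh i hi
      rw [htail i hi]
      exact hh i hi
  have h0mem : ∀ u : dbVtx (n+c) n n, u.val ⟨0, hz⟩ ∈ dbTailCompl u := by
    intro u
    simp only [dbTailCompl, Finset.mem_filter, Finset.mem_univ, true_and]
    intro i hi hcon
    have := vinj u hcon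
    have h4 : (i:ℕ) = 0 := by simpa [Fin.ext_iff] using this
    omega
  have h0eq : v.val ⟨0, hz⟩ = w.val ⟨0, hz⟩ := by
    rcases (memS v).mpr hv with hv1 | hv1 <;> rcases (memS w).mpr hw with hw1 | hw1
    · exact hv1.trans hw1.symm
    · exfalso
      obtain ⟨i, hipos, hio⟩ := hw1.2.1
      have : v.val i = o := by rw [htail i hipos]; exact hio
      have h5 := vinj v (this.trans hv1.symm)
      have h6 : (i:ℕ) = 0 := by simpa [Fin.ext_iff] using h5
      omega
    · exfalso
      obtain ⟨i, hipos, hio⟩ := hv1.2.1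
      have : w.val i = o := by rw [← htail i hipos]; exact hio
      have h5 := vinj w (this.trans hw1.symm)
      have h6 : (i:ℕ) = 0 := by simpa [Fin.ext_iff] using h5
      omega
    · refine le_antisymm ?_ ?_
      · exact hv1.2.2 _ (hTC ▸ h0mem w)
      · exact hw1.2.2 _ (hTC ▸ h0mem v)
  apply Subtype.ext
  funext i
  by_cases hi : (i:ℕ) = 0
  · have : i = ⟨0, hz⟩ := Fin.ext hi
    rw [this]
    exact h0eq
  · exact htail i (by omega)

theorem dbMainAux (n c : ℕ) (hc : 1 ≤ c) (hn : 2 ≤ n) :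
    (1 / ((c : ℚ) + 2)) * (((n + c).factorial : ℚ) / (c.factorial : ℚ))
      ≤ (gammaDir (n + c) n n : ℚ) ∧
    (gammaDir (n + c) n n : ℚ) ≤
      (((n + c - 1) : ℕ) : ℚ) * ((n + c - 1).factorial : ℚ) / ((c + 1).factorial : ℚ) := by
  have hL := dbLower hn hc
  have hU := dbUpper hn hc
  constructor
  · have hfac : c.factorial * ((n+c).descFactorial n) = (n+c).factorial := by
      have h := Nat.factorial_mul_descFactorial (show n ≤ n + c by omega)
      rwa [show n + c - n = c by omega] at h
    have hFQ : ((n+c).factorial : ℚ) = (c.factorial : ℚ) * ((n+c).descFactorial n : ℚ) := by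
      exact_mod_cast hfac.symm
    have hQ : ((n+c).descFactorial n : ℚ) ≤ ((c:ℚ)+2) * (gammaDir (n+c) n n : ℚ) := by
      have h2 : ((n+c).descFactorial n : ℚ) ≤ ((c+2 : ℕ) : ℚ) * (gammaDir (n+c) n n : ℚ) := by
        exact_mod_cast hL
      push_cast at h2
      linarith
    have hcpos : (0:ℚ) < (c:ℚ) + 2 := by positivity
    rw [hFQ, mul_div_cancel_left₀ _
      (show (c.factorial : ℚ) ≠ 0 from Nat.cast_ne_zero.mpr c.factorial_ne_zero)]
    rw [div_mul_eq_mul_div, one_mul, div_le_iff₀ hcpos]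
    linarith
  · have hfac2 : (c+1).factorial * ((n+c-1).descFactorial (n-2)) = (n+c-1).factorial := by
      have h := Nat.factorial_mul_descFactorial (show n-2 ≤ n+c-1 by omega)
      rwa [show n + c - 1 - (n-2) = c+1 by omega] at h
    have hQ : (gammaDir (n+c) n n : ℚ)
        ≤ ((n+c-1 : ℕ) : ℚ) * ((n+c-1).descFactorial (n-2) : ℚ) := by
      exact_mod_cast hU
    have hF2 : ((n+c-1).factorial : ℚ)
        = ((c+1).factorial : ℚ) * ((n+c-1).descFactorial (n-2) : ℚ) := by
      exact_mod_cast hfac2.symm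
    rw [hF2, mul_div_assoc, mul_div_cancel_left₀ _
      (show ((c+1).factorial : ℚ) ≠ 0 from Nat.cast_ne_zero.mpr (c+1).factorial_ne_zero)]
    exact hQ

theorem gammaDir_partial_permutations (n c : ℕ) (hc : 1 ≤ c) (hn : 2 ≤ n) :
    (1 / ((c : ℚ) + 2)) * (((n + c).factorial : ℚ) / (c.factorial : ℚ))
      ≤ (gammaDir (n + c) n n : ℚ) ∧
    (gammaDir (n + c) n n : ℚ) ≤
      (((n + c - 1) : ℕ) : ℚ) * ((n + c - 1).factorial : ℚ) / ((c + 1).factorial : ℚ) :=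
  dbMainAux n c hc hn
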